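/- (Exactness case of Theorem 1.) Let p be a strictly positive joint probability mass function of random variables (X_1, …, X_d, Y) on finite types, fix i ∈ {1,…,d} and a subset S ⊆ {1,…,d} with i ∈ S. Suppose that for every T ⊆ S \ {i}, the variable X_i is conditionally independent of X_{{1,…,d} \ S} given X_T, and also conditionally independent of X_{{1,…,d} \ S} given (X_T, Y). Then for every x in the support of the marginal of X, the restricted Shapley estimate equals the Shapley value: φ̂^S_x(i) = φ_x(i). -/
import Mathlib


open scoped Classical BigOperators

variable {d : ℕ} {𝒳 : Fin d → Type*} [∀ j, Fintype (𝒳 j)] {𝒴 : Type*} [Fintype 𝒴]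

/-- The joint marginal probability `p(x_S, y)` of `(X_S, Y)` at the restriction of `x` to `S`. -/
noncomputable def margXY (p : (∀ j, 𝒳 j) → 𝒴 → ℝ) (S : Finset (Fin d))
    (x : ∀ j, 𝒳 j) (y : 𝒴) : ℝ :=
  ∑ x' : ∀ j, 𝒳 j, if ∀ j ∈ S, x' j = x j then p x' y else 0

/-- The marginal probability `p(x_S)` of `X_S` at the restriction of `x` to `S`. -/
noncomputable def margX (p : (∀ j, 𝒳 j) → 𝒴 → ℝ) (S : Finset (Fin d))
    (x : ∀ j, 𝒳 j) : ℝ :=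
  ∑ y, margXY p S x y

/-- The marginal probability `p(x)` of the full feature vector `X`. -/
noncomputable def pX (p : (∀ j, 𝒳 j) → 𝒴 → ℝ) (x : ∀ j, 𝒳 j) : ℝ :=
  ∑ y, p x y

/-- The conditional probability `p(y | x_S) = p(y, x_S) / p(x_S)`
(for `S = ∅` this is `p(y)` when `p` sums to one). -/
noncomputable def condY (p : (∀ j, 𝒳 j) → 𝒴 → ℝ) (S : Finset (Fin d))
    (x : ∀ j, 𝒳 j) (y : 𝒴) : ℝ :=
  margXY p S x y / margX p S x

/-- The importance score `v_x(S) = ∑_y p(y | x) log p(y | x_S)`. -/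
noncomputable def impScore (p : (∀ j, 𝒳 j) → 𝒴 → ℝ) (x : ∀ j, 𝒳 j)
    (S : Finset (Fin d)) : ℝ :=
  ∑ y, condY p Finset.univ x y * Real.log (condY p S x y)

/-- The marginal contribution `m_x(S, i) = v_x(S) − v_x(S \ {i})`. -/
noncomputable def margContrib (p : (∀ j, 𝒳 j) → 𝒴 → ℝ) (x : ∀ j, 𝒳 j)
    (S : Finset (Fin d)) (i : Fin d) : ℝ :=
  impScore p x S - impScore p x (S.erase i)

/-- The Shapley value `φ_x(i)`. -/
noncomputable def shapley (p : (∀ j, 𝒳 j) → 𝒴 → ℝ) (x : ∀ j, 𝒳 j) (i : Fin d) : ℝ :=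
  (1 / (d : ℝ)) * ∑ A : Finset (Fin d),
    if i ∈ A then margContrib p x A i / ((d - 1).choose (A.card - 1) : ℝ) else 0

/-- The restricted Shapley estimate `φ̂^S_x(i)` over a feature subset `S` containing `i`. -/
noncomputable def shapleyRes (p : (∀ j, 𝒳 j) → 𝒴 → ℝ) (x : ∀ j, 𝒳 j)
    (S : Finset (Fin d)) (i : Fin d) : ℝ :=
  (1 / (S.card : ℝ)) * ∑ T ∈ S.powerset,
    if i ∈ T then margContrib p x T i / ((S.card - 1).choose (T.card - 1) : ℝ) else 0

/-- The absolute conditional mutual information `I_a(X_A; X_B | X_C)`. -/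
noncomputable def IaX (p : (∀ j, 𝒳 j) → 𝒴 → ℝ) (A B C : Finset (Fin d)) : ℝ :=
  ∑ x : ∀ j, 𝒳 j, pX p x *
    |Real.log ((margX p (A ∪ B ∪ C) x * margX p C x) /
      (margX p (A ∪ C) x * margX p (B ∪ C) x))|

/-- The absolute conditional mutual information `I_a(X_A; X_B | X_C, Y)`. -/
noncomputable def IaXY (p : (∀ j, 𝒳 j) → 𝒴 → ℝ) (A B C : Finset (Fin d)) : ℝ :=
  ∑ x : ∀ j, 𝒳 j, ∑ y, p x y *
    |Real.log ((margXY p (A ∪ B ∪ C) x y * margXY p C x y) /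
      (margXY p (A ∪ C) x y * margXY p (B ∪ C) x y))|


set_option linter.unusedSectionVars false

lemma nat_key (n j : ℕ) (h : j + 1 ≤ n) :
    n * ((n-1).choose j) * ((n+1).choose (j+1)) = (n+1) * (n.choose j) * (n.choose (j+1)) := by
  have hn : 1 ≤ n := le_trans (Nat.le_add_left 1 j) h
  apply Nat.eq_of_mul_eq_mul_right (Nat.succ_pos j)
  -- multiply both sides by (j+1)
  have e1 : (n+1).choose (j+1) * (j+1) = (n+1) * n.choose j :=
    (Nat.add_one_mul_choose_eq n j).symm
  have e2 : n.choose (j+1) * (j+1) = n.choose j * (n - j) := Nat.choose_succ_right_eq n j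
  have e3 : (n-1).choose j * n = n.choose j * (n - j) := by
    have := Nat.choose_mul_succ_eq (n-1) j
    have h1 : n - 1 + 1 = n := Nat.succ_pred_eq_of_pos hn
    rw [h1] at this
    exact this
  calc n * ((n-1).choose j) * ((n+1).choose (j+1)) * (j+1)
      = ((n-1).choose j * n) * ((n+1).choose (j+1) * (j+1)) := by ring
    _ = (n.choose j * (n - j)) * ((n+1) * n.choose j) := by rw [e3, e1]
    _ = ((n+1) * n.choose j) * (n.choose j * (n - j)) := by ring
    _ = ((n+1) * n.choose j) * (n.choose (j+1) * (j+1)) := by rw [e2]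
    _ = (n+1) * n.choose j * n.choose (j+1) * (j+1) := by ring

lemma harmonic_choose (n j : ℕ) (h : j + 1 ≤ n) :
    (1:ℝ)/(n.choose j) + 1/(n.choose (j+1)) = (n+1)/(n * ((n-1).choose j)) := by
  have hn : 0 < n := lt_of_lt_of_le (Nat.succ_pos j) h
  have h1 : (0:ℝ) < (n.choose j : ℝ) := by
    exact_mod_cast Nat.choose_pos (le_trans (Nat.le_succ j) h)
  have h2 : (0:ℝ) < (n.choose (j+1) : ℝ) := by exact_mod_cast Nat.choose_pos h
  have h3 : (0:ℝ) < ((n-1).choose j : ℝ) := by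
    exact_mod_cast Nat.choose_pos (by omega : j ≤ n - 1)
  have h4 : (0:ℝ) < (n:ℝ) := by exact_mod_cast hn
  have hkey : (n:ℝ) * ((n-1).choose j) * ((n+1).choose (j+1))
      = (n+1) * (n.choose j) * (n.choose (j+1)) := by exact_mod_cast nat_key n j h
  have hpascal : ((n+1).choose (j+1) : ℝ) = (n.choose j : ℝ) + (n.choose (j+1) : ℝ) := by
    exact_mod_cast Nat.choose_succ_succ n j
  have hpascal' : (1:ℝ) * ↑(n.choose (j+1)) + ↑(n.choose j) * 1 = ((n+1).choose (j+1) : ℝ) := by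
    rw [hpascal]; ring
  rw [div_add_div _ _ h1.ne' h2.ne', hpascal',
    div_eq_div_iff (by positivity) (by positivity)]
  linear_combination hkey

lemma comb_sum (s t : ℕ) (ht : t < s) (hs : 1 ≤ s) :
    ∀ n, s ≤ n →
    ∑ k ∈ Finset.range (n - s + 1), ((n-s).choose k : ℝ) / (n * ((n-1).choose (t+k)))
      = 1 / (s * ((s-1).choose t)) := by
  intro n hn
  induction n, hn using Nat.le_induction with
  | base => simp
  | succ n hn ih =>
    have hm : n + 1 - s = (n - s) + 1 := by omega
    have hn1 : n + 1 - 1 = n := by omega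
    simp only [hm, hn1]
    push_cast
    set m := n - s with hmdef
    set f' : ℕ → ℝ := fun k => 1 / (((n:ℝ)+1) * (n.choose (t+k))) with hf'
    have e : ∀ k, k ≤ m → f' k + f' (k+1) = 1 / ((n:ℝ) * ((n-1).choose (t+k))) := by
      intro k hk
      have htk : (t + k) + 1 ≤ n := by omega
      have h := harmonic_choose n (t+k) htk
      have ha : (0:ℝ) < (n.choose (t+k) : ℝ) := by
        exact_mod_cast Nat.choose_pos (by omega : t + k ≤ n)
      have hb : (0:ℝ) < (n.choose (t+k+1) : ℝ) := by exact_mod_cast Nat.choose_pos htk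
      have hc : (0:ℝ) < ((n-1).choose (t+k) : ℝ) := by
        exact_mod_cast Nat.choose_pos (by omega : t + k ≤ n - 1)
      have hn0 : (0:ℝ) < (n:ℝ) := by exact_mod_cast (by omega : 0 < n)
      simp only [hf']
      have hidx : t + (k+1) = (t+k)+1 := by omega
      rw [hidx]
      rw [div_add_div _ _ (by positivity) (by positivity),
        div_eq_div_iff (by positivity) (by positivity)]
      rw [div_add_div _ _ ha.ne' hb.ne', div_eq_div_iff (by positivity) (by positivity)] at h
      linear_combination ((n:ℝ)+1) * h
    have hstep1 : ∀ k ∈ Finset.range (m+1+1),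
        ((m+1).choose k : ℝ) / (((n:ℝ)+1) * (n.choose (t+k))) = ((m+1).choose k : ℝ) * f' k := by
      intro k _
      simp only [hf']
      ring
    rw [Finset.sum_congr rfl hstep1, Finset.sum_range_succ']
    have hpas : ∀ k, ((m+1).choose (k+1) : ℝ) = (m.choose k : ℝ) + (m.choose (k+1) : ℝ) :=
      fun k => by exact_mod_cast Nat.choose_succ_succ m k
    simp only [hpas, add_mul, Nat.choose_zero_right, Nat.cast_one, one_mul]
    rw [Finset.sum_add_distrib]
    have hB : ∑ k ∈ Finset.range (m+1), (m.choose (k+1) : ℝ) * f' (k+1)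
        = ∑ k ∈ Finset.range (m+1), (m.choose k : ℝ) * f' k - f' 0 := by
      have h1 := Finset.sum_range_succ' (fun k => (m.choose k : ℝ) * f' k) (m+1)
      have h2 : ∑ k ∈ Finset.range (m+1+1), (m.choose k : ℝ) * f' k
          = ∑ k ∈ Finset.range (m+1), (m.choose k : ℝ) * f' k := by
        rw [Finset.sum_range_succ]
        simp [Nat.choose_succ_self]
      rw [h2] at h1
      simp only [Nat.choose_zero_right, Nat.cast_one, one_mul] at h1
      linarith
    rw [hB]
    have hmerge : ∑ k ∈ Finset.range (m+1), (m.choose k : ℝ) * f' (k+1)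
        + (∑ k ∈ Finset.range (m+1), (m.choose k : ℝ) * f' k - f' 0) + f' 0
        = ∑ k ∈ Finset.range (m+1), (m.choose k : ℝ) * (f' k + f' (k+1)) := by
      have h3 : ∑ k ∈ Finset.range (m+1), (m.choose k : ℝ) * (f' k + f' (k+1))
          = ∑ k ∈ Finset.range (m+1), ((m.choose k : ℝ) * f' k + (m.choose k : ℝ) * f' (k+1)) :=
        Finset.sum_congr rfl fun k _ => mul_add _ _ _
      rw [h3, Finset.sum_add_distrib]
      ring
    rw [hmerge]
    have h4 : ∑ k ∈ Finset.range (m+1), (m.choose k : ℝ) * (f' k + f' (k+1))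
        = ∑ k ∈ Finset.range (m+1), (m.choose k : ℝ) / ((n:ℝ) * ((n-1).choose (t+k))) := by
      refine Finset.sum_congr rfl fun k hk => ?_
      rw [e k (Nat.lt_succ_iff.mp (Finset.mem_range.mp hk))]
      ring
    rw [h4]
    exact ih


lemma margXY_pos (p : (∀ j, 𝒳 j) → 𝒴 → ℝ) (hpos : ∀ x y, 0 < p x y)
    (E : Finset (Fin d)) (x : ∀ j, 𝒳 j) (y : 𝒴) : 0 < margXY p E x y := by
  unfold margXY
  refine Finset.sum_pos' (fun z _ => ?_) ⟨x, Finset.mem_univ x, ?_⟩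
  · split
    · exact (hpos z y).le
    · exact le_refl 0
  · rw [if_pos (fun j _ => rfl)]; exact hpos x y

lemma margX_pos (p : (∀ j, 𝒳 j) → 𝒴 → ℝ) (hpos : ∀ x y, 0 < p x y)
    (E : Finset (Fin d)) (x : ∀ j, 𝒳 j) [Nonempty 𝒴] : 0 < margX p E x :=
  Finset.sum_pos (fun y _ => margXY_pos p hpos E x y) Finset.univ_nonempty

lemma margXY_congr (p : (∀ j, 𝒳 j) → 𝒴 → ℝ) (E : Finset (Fin d)) {x x' : ∀ j, 𝒳 j}
    (h : ∀ j ∈ E, x' j = x j) (y : 𝒴) : margXY p E x' y = margXY p E x y := by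
  unfold margXY
  refine Finset.sum_congr rfl fun z _ => ?_
  have : (∀ j ∈ E, z j = x' j) ↔ (∀ j ∈ E, z j = x j) :=
    forall₂_congr fun j hj => by rw [h j hj]
  simp only [this]

lemma margX_congr (p : (∀ j, 𝒳 j) → 𝒴 → ℝ) (E : Finset (Fin d)) {x x' : ∀ j, 𝒳 j}
    (h : ∀ j ∈ E, x' j = x j) : margX p E x' = margX p E x :=
  Finset.sum_congr rfl fun y _ => margXY_congr p E h y

lemma sum_restrict_margXY (p : (∀ j, 𝒳 j) → 𝒴 → ℝ) (D E : Finset (Fin d))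
    (hDE : Disjoint D E) (x : ∀ j, 𝒳 j) (y : 𝒴) :
    ∑ x' : ∀ j, 𝒳 j, (if ∀ j, j ∉ D → x' j = x j then margXY p (D ∪ E) x' y else 0)
      = margXY p E x y := by
  unfold margXY
  have h1 : ∀ x' : ∀ j, 𝒳 j,
      (if ∀ j, j ∉ D → x' j = x j then
        ∑ z : ∀ j, 𝒳 j, (if ∀ j ∈ D ∪ E, z j = x' j then p z y else 0) else 0)
      = ∑ z : ∀ j, 𝒳 j,
          (if ∀ j, j ∉ D → x' j = x j then (if ∀ j ∈ D ∪ E, z j = x' j then p z y else 0) else 0) := by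
    intro x'
    split
    · rfl
    · simp
  simp only [h1]
  rw [Finset.sum_comm]
  refine Finset.sum_congr rfl fun z _ => ?_
  set x0 : ∀ j, 𝒳 j := fun j => if j ∈ D then z j else x j with hx0
  rw [Finset.sum_eq_single x0]
  · have hc1 : ∀ j, j ∉ D → x0 j = x j := fun j hj => by simp [hx0, hj]
    rw [if_pos hc1]
    have hc2 : (∀ j ∈ D ∪ E, z j = x0 j) ↔ (∀ j ∈ E, z j = x j) := by
      constructor
      · intro h2' j hj
        have hjD : j ∉ D := fun hjD => (Finset.disjoint_left.mp hDE) hjD hj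
        have := h2' j (Finset.mem_union_right _ hj)
        rw [this]; simp [hx0, hjD]
      · intro h' j hj
        rcases Finset.mem_union.mp hj with hjD | hjE
        · simp [hx0, hjD]
        · have hjD : j ∉ D := fun hjD => (Finset.disjoint_left.mp hDE) hjD hjE
          simp [hx0, hjD, h' j hjE]
    simp only [hc2]
  · intro b _ hb
    by_cases h1' : ∀ j, j ∉ D → b j = x j
    · rw [if_pos h1']
      by_cases h2' : ∀ j ∈ D ∪ E, z j = b j
      · exfalso
        apply hb
        funext j
        by_cases hj : j ∈ D
        · simp [hx0, hj, (h2' j (Finset.mem_union_left _ hj)).symm]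
        · simp [hx0, hj, h1' j hj]
      · rw [if_neg h2']
    · rw [if_neg h1']
  · intro h; exact absurd (Finset.mem_univ x0) h

lemma sum_restrict_margX (p : (∀ j, 𝒳 j) → 𝒴 → ℝ) (D E : Finset (Fin d))
    (hDE : Disjoint D E) (x : ∀ j, 𝒳 j) :
    ∑ x' : ∀ j, 𝒳 j, (if ∀ j, j ∉ D → x' j = x j then margX p (D ∪ E) x' else 0)
      = margX p E x := by
  unfold margX
  have h1 : ∀ x' : ∀ j, 𝒳 j,
      (if ∀ j, j ∉ D → x' j = x j then ∑ y, margXY p (D ∪ E) x' y else 0)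
      = ∑ y, (if ∀ j, j ∉ D → x' j = x j then margXY p (D ∪ E) x' y else 0) := by
    intro x'
    split
    · rfl
    · simp
  simp only [h1]
  rw [Finset.sum_comm]
  exact Finset.sum_congr rfl fun y _ => sum_restrict_margXY p D E hDE x y

set_option linter.unusedSectionVars false

lemma ci_shrink (i : Fin d) (S W T : Finset (Fin d)) (hiS : i ∈ S)
    (hT : T ⊆ S.erase i) (hW : W ⊆ Finset.univ \ S)
    (g : Finset (Fin d) → (∀ j, 𝒳 j) → ℝ)
    (hcongr : ∀ (E : Finset (Fin d)) (x x' : ∀ j, 𝒳 j), (∀ j ∈ E, x' j = x j) → g E x' = g E x)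
    (hmarg : ∀ (D E : Finset (Fin d)), Disjoint D E → ∀ x : ∀ j, 𝒳 j,
      ∑ x' : ∀ j, 𝒳 j, (if ∀ j, j ∉ D → x' j = x j then g (D ∪ E) x' else 0) = g E x)
    (hCI : ∀ x : ∀ j, 𝒳 j,
      g ({i} ∪ (Finset.univ \ S) ∪ T) x * g T x = g ({i} ∪ T) x * g ((Finset.univ \ S) ∪ T) x)
    (x : ∀ j, 𝒳 j) :
    g ({i} ∪ W ∪ T) x * g T x = g ({i} ∪ T) x * g (W ∪ T) x := by
  classical
  set D : Finset (Fin d) := (Finset.univ \ S) \ W with hD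
  have hTS : ∀ j ∈ T, j ∈ S := fun j hj => Finset.mem_of_mem_erase (hT hj)
  have hDS : ∀ j ∈ D, j ∉ S := fun j hj => (Finset.mem_sdiff.mp (Finset.mem_sdiff.mp hj).1).2
  have hDW : ∀ j ∈ D, j ∉ W := fun j hj => (Finset.mem_sdiff.mp hj).2
  have hdisj1 : Disjoint D ({i} ∪ W ∪ T) := by
    rw [Finset.disjoint_left]
    intro j hj hj'
    rcases Finset.mem_union.mp hj' with hj'' | hjT
    · rcases Finset.mem_union.mp hj'' with hji | hjW
      · exact hDS j hj (Finset.mem_singleton.mp hji ▸ hiS)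
      · exact hDW j hj hjW
    · exact hDS j hj (hTS j hjT)
  have hdisj2 : Disjoint D (W ∪ T) := by
    rw [Finset.disjoint_left]
    intro j hj hj'
    rcases Finset.mem_union.mp hj' with hjW | hjT
    · exact hDW j hj hjW
    · exact hDS j hj (hTS j hjT)
  have hU1 : D ∪ ({i} ∪ W ∪ T) = {i} ∪ (Finset.univ \ S) ∪ T := by
    ext j
    have hWS : j ∈ W → j ∉ S := fun h => (Finset.mem_sdiff.mp (hW h)).2
    simp only [hD, Finset.mem_union, Finset.mem_sdiff, Finset.mem_singleton, Finset.mem_univ,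
      true_and]
    tauto
  have hU2 : D ∪ (W ∪ T) = (Finset.univ \ S) ∪ T := by
    ext j
    have hWS : j ∈ W → j ∉ S := fun h => (Finset.mem_sdiff.mp (hW h)).2
    simp only [hD, Finset.mem_union, Finset.mem_sdiff, Finset.mem_univ, true_and]
    tauto
  have key1 : g ({i} ∪ W ∪ T) x = ∑ x' : ∀ j, 𝒳 j,
      (if ∀ j, j ∉ D → x' j = x j then g ({i} ∪ (Finset.univ \ S) ∪ T) x' else 0) := by
    rw [← hmarg D ({i} ∪ W ∪ T) hdisj1 x]
    exact Finset.sum_congr rfl fun x' _ => by rw [hU1]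
  have key2 : g (W ∪ T) x = ∑ x' : ∀ j, 𝒳 j,
      (if ∀ j, j ∉ D → x' j = x j then g ((Finset.univ \ S) ∪ T) x' else 0) := by
    rw [← hmarg D (W ∪ T) hdisj2 x]
    exact Finset.sum_congr rfl fun x' _ => by rw [hU2]
  rw [key1, key2, Finset.sum_mul, Finset.mul_sum]
  refine Finset.sum_congr rfl fun x' _ => ?_
  by_cases hx' : ∀ j, j ∉ D → x' j = x j
  · rw [if_pos hx', if_pos hx']
    have hTx : g T x = g T x' := (hcongr T x x' fun j hj =>
      hx' j (fun hjD => hDS j hjD (hTS j hj))).symm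
    have hiTx : g ({i} ∪ T) x = g ({i} ∪ T) x' := (hcongr ({i} ∪ T) x x' fun j hj => by
      rcases Finset.mem_union.mp hj with hji | hjT
      · exact hx' j (fun hjD => hDS j hjD (Finset.mem_singleton.mp hji ▸ hiS))
      · exact hx' j (fun hjD => hDS j hjD (hTS j hjT))).symm
    rw [hTx, hiTx]
    exact hCI x'
  · rw [if_neg hx', if_neg hx']
    ring

lemma margContrib_inter [Nonempty 𝒴] (p : (∀ j, 𝒳 j) → 𝒴 → ℝ)
    (hpos : ∀ x y, 0 < p x y) (i : Fin d) (S : Finset (Fin d)) (hiS : i ∈ S)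
    (hCI : ∀ T ⊆ S.erase i,
      (∀ x : ∀ j, 𝒳 j, ∀ y : 𝒴,
        margXY p ({i} ∪ (Finset.univ \ S) ∪ T) x y * margXY p T x y
          = margXY p ({i} ∪ T) x y * margXY p ((Finset.univ \ S) ∪ T) x y) ∧
      (∀ x : ∀ j, 𝒳 j,
        margX p ({i} ∪ (Finset.univ \ S) ∪ T) x * margX p T x
          = margX p ({i} ∪ T) x * margX p ((Finset.univ \ S) ∪ T) x))
    (A : Finset (Fin d)) (hiA : i ∈ A) (x : ∀ j, 𝒳 j) :
    margContrib p x A i = margContrib p x (A ∩ S) i := by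
  classical
  set T : Finset (Fin d) := (A ∩ S).erase i with hTdef
  set W : Finset (Fin d) := A \ S with hWdef
  have hT : T ⊆ S.erase i := by
    intro j hj
    rcases Finset.mem_erase.mp hj with ⟨hji, hj2⟩
    exact Finset.mem_erase.mpr ⟨hji, (Finset.mem_inter.mp hj2).2⟩
  have hWsub : W ⊆ Finset.univ \ S := by
    intro j hj
    exact Finset.mem_sdiff.mpr ⟨Finset.mem_univ j, (Finset.mem_sdiff.mp hj).2⟩
  have hA : {i} ∪ W ∪ T = A := by
    ext j
    simp only [hTdef, hWdef, Finset.mem_union, Finset.mem_singleton, Finset.mem_sdiff,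
      Finset.mem_erase, Finset.mem_inter]
    constructor
    · rintro ((h | h) | h)
      · exact h ▸ hiA
      · exact h.1
      · exact h.2.1
    · intro hjA
      by_cases hji : j = i
      · exact Or.inl (Or.inl hji)
      · by_cases hjS : j ∈ S
        · exact Or.inr ⟨hji, hjA, hjS⟩
        · exact Or.inl (Or.inr ⟨hjA, hjS⟩)
  have hAe : W ∪ T = A.erase i := by
    ext j
    simp only [hTdef, hWdef, Finset.mem_union, Finset.mem_sdiff, Finset.mem_erase,
      Finset.mem_inter]
    constructor
    · rintro (h | h)
      · exact ⟨fun hji => h.2 (hji ▸ hiS), h.1⟩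
      · exact ⟨h.1, h.2.1⟩
    · rintro ⟨hji, hjA⟩
      by_cases hjS : j ∈ S
      · exact Or.inr ⟨hji, hjA, hjS⟩
      · exact Or.inl ⟨hjA, hjS⟩
  have hAS : {i} ∪ T = A ∩ S := by
    ext j
    simp only [hTdef, Finset.mem_union, Finset.mem_singleton, Finset.mem_erase, Finset.mem_inter]
    constructor
    · rintro (h | h)
      · exact ⟨h ▸ hiA, h ▸ hiS⟩
      · exact h.2
    · intro h
      by_cases hji : j = i
      · exact Or.inl hji
      · exact Or.inr ⟨hji, h⟩
  have hAST : (A ∩ S).erase i = T := rfl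
  -- the two product identities with W in place of univ \ S
  have hXY : ∀ y, margXY p A x y * margXY p T x y
      = margXY p (A ∩ S) x y * margXY p (A.erase i) x y := by
    intro y
    have := ci_shrink i S W T hiS hT hWsub (fun E x => margXY p E x y)
      (fun E x x' h => margXY_congr p E h y)
      (fun D E hDE x => sum_restrict_margXY p D E hDE x y)
      (fun x' => (hCI T hT).1 x' y) x
    rw [hA, hAe, hAS] at this
    exact this
  have hX : margX p A x * margX p T x = margX p (A ∩ S) x * margX p (A.erase i) x := by
    have := ci_shrink i S W T hiS hT hWsub (fun E x => margX p E x)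
      (fun E x x' h => margX_congr p E h)
      (fun D E hDE x => sum_restrict_margX p D E hDE x)
      (fun x' => (hCI T hT).2 x') x
    rw [hA, hAe, hAS] at this
    exact this
  -- positivity facts
  have pXY : ∀ (E : Finset (Fin d)) y, margXY p E x y ≠ 0 :=
    fun E y => (margXY_pos p hpos E x y).ne'
  have pXpos : ∀ (E : Finset (Fin d)), margX p E x ≠ 0 :=
    fun E => (margX_pos p hpos E x).ne'
  have key : ∀ y, Real.log (condY p A x y) - Real.log (condY p (A.erase i) x y)
      = Real.log (condY p (A ∩ S) x y) - Real.log (condY p ((A ∩ S).erase i) x y) := by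
    intro y
    rw [hAST]
    unfold condY
    rw [Real.log_div (pXY A y) (pXpos A), Real.log_div (pXY _ y) (pXpos _),
      Real.log_div (pXY _ y) (pXpos _), Real.log_div (pXY _ y) (pXpos _)]
    have lXY : Real.log (margXY p A x y) + Real.log (margXY p T x y)
        = Real.log (margXY p (A ∩ S) x y) + Real.log (margXY p (A.erase i) x y) := by
      rw [← Real.log_mul (pXY A y) (pXY T y), ← Real.log_mul (pXY _ y) (pXY _ y), hXY y]
    have lX : Real.log (margX p A x) + Real.log (margX p T x)
        = Real.log (margX p (A ∩ S) x) + Real.log (margX p (A.erase i) x) := by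
      rw [← Real.log_mul (pXpos A) (pXpos T), ← Real.log_mul (pXpos _) (pXpos _), hX]
    linarith
  unfold margContrib impScore
  rw [← Finset.sum_sub_distrib, ← Finset.sum_sub_distrib]
  refine Finset.sum_congr rfl fun y _ => ?_
  rw [← mul_sub, ← mul_sub, key y]

/-- Exactness case of Theorem 1: if for every `T ⊆ S \ {i}` the feature `X_i` is
conditionally independent of `X_{[d] \ S}` given `X_T`, and also given `(X_T, Y)`,
then the restricted Shapley estimate equals the Shapley value at every point. -/

theorem restricted_shapley_exact (p : (∀ j, 𝒳 j) → 𝒴 → ℝ)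
    (hpos : ∀ x y, 0 < p x y)
    (hsum : ∑ x : ∀ j, 𝒳 j, ∑ y, p x y = 1)
    (i : Fin d) (S : Finset (Fin d)) (hiS : i ∈ S)
    (hCI : ∀ T ⊆ S.erase i,
      (∀ x : ∀ j, 𝒳 j, ∀ y : 𝒴,
        margXY p ({i} ∪ (Finset.univ \ S) ∪ T) x y * margXY p T x y
          = margXY p ({i} ∪ T) x y * margXY p ((Finset.univ \ S) ∪ T) x y) ∧
      (∀ x : ∀ j, 𝒳 j,
        margX p ({i} ∪ (Finset.univ \ S) ∪ T) x * margX p T x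
          = margX p ({i} ∪ T) x * margX p ((Finset.univ \ S) ∪ T) x)) :
    ∀ x : ∀ j, 𝒳 j, shapleyRes p x S i = shapley p x i := by
  classical
  have hY : Nonempty 𝒴 := by
    by_contra h
    have : IsEmpty 𝒴 := not_nonempty_iff.mp h
    simp at hsum
  intro x
  have hd0 : 0 < d := i.pos
  have hs1 : 1 ≤ S.card := Finset.card_pos.mpr ⟨i, hiS⟩
  have hsd : S.card ≤ d := by simpa using Finset.card_le_card (Finset.subset_univ S)
  have hScompl : (Sᶜ : Finset (Fin d)).card = d - S.card := by
    rw [Finset.card_compl]; simp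
  symm
  unfold shapley shapleyRes
  rw [Finset.mul_sum, Finset.mul_sum]
  have hbij : ∑ A : Finset (Fin d), (1/(d:ℝ)) *
        (if i ∈ A then margContrib p x A i / ((d - 1).choose (A.card - 1) : ℝ) else 0)
      = ∑ q ∈ S.powerset ×ˢ (Sᶜ : Finset (Fin d)).powerset, (1/(d:ℝ)) *
        (if i ∈ q.1 ∪ q.2 then
          margContrib p x (q.1 ∪ q.2) i / ((d - 1).choose ((q.1 ∪ q.2).card - 1) : ℝ) else 0) := by
    refine Finset.sum_nbij' (fun A => (A ∩ S, A \ S)) (fun q => q.1 ∪ q.2) ?_ ?_ ?_ ?_ ?_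
    · intro A _
      refine Finset.mem_product.mpr ⟨Finset.mem_powerset.mpr Finset.inter_subset_right,
        Finset.mem_powerset.mpr ?_⟩
      intro j hj
      exact Finset.mem_compl.mpr (Finset.mem_sdiff.mp hj).2
    · intro q _; exact Finset.mem_univ _
    · intro A _
      ext j
      simp only [Finset.mem_union, Finset.mem_inter, Finset.mem_sdiff]
      tauto
    · intro q hq
      rcases Finset.mem_product.mp hq with ⟨h1, h2⟩
      have hT := Finset.mem_powerset.mp h1
      have hW := Finset.mem_powerset.mp h2
      have hWS : ∀ j ∈ q.2, j ∉ S := fun j hj => Finset.mem_compl.mp (hW hj)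
      have e1 : (q.1 ∪ q.2) ∩ S = q.1 := by
        ext j
        simp only [Finset.mem_inter, Finset.mem_union]
        constructor
        · rintro ⟨h | h, hS⟩
          · exact h
          · exact absurd hS (hWS j h)
        · intro h; exact ⟨Or.inl h, hT h⟩
      have e2 : (q.1 ∪ q.2) \ S = q.2 := by
        ext j
        simp only [Finset.mem_sdiff, Finset.mem_union]
        constructor
        · rintro ⟨h | h, hS⟩
          · exact absurd (hT h) hS
          · exact h
        · intro h; exact ⟨Or.inr h, hWS j h⟩
      exact Prod.ext e1 e2
    · intro A _
      have : A ∩ S ∪ A \ S = A := by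
        ext j
        simp only [Finset.mem_union, Finset.mem_inter, Finset.mem_sdiff]
        tauto
      rw [this]
  rw [hbij]
  have hsp : ∑ q ∈ S.powerset ×ˢ (Sᶜ : Finset (Fin d)).powerset, (1/(d:ℝ)) *
        (if i ∈ q.1 ∪ q.2 then
          margContrib p x (q.1 ∪ q.2) i / ((d - 1).choose ((q.1 ∪ q.2).card - 1) : ℝ) else 0)
      = ∑ T ∈ S.powerset, ∑ W ∈ (Sᶜ : Finset (Fin d)).powerset, (1/(d:ℝ)) *
        (if i ∈ T ∪ W then
          margContrib p x (T ∪ W) i / ((d - 1).choose ((T ∪ W).card - 1) : ℝ) else 0) :=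
    Finset.sum_product' _ _ (fun T W => (1/(d:ℝ)) *
        (if i ∈ T ∪ W then
          margContrib p x (T ∪ W) i / ((d - 1).choose ((T ∪ W).card - 1) : ℝ) else 0))
  rw [hsp]
  refine Finset.sum_congr rfl fun T hT => ?_
  have hTS : T ⊆ S := Finset.mem_powerset.mp hT
  by_cases hiT : i ∈ T
  · have ht1 : 1 ≤ T.card := Finset.card_pos.mpr ⟨i, hiT⟩
    have htS : T.card ≤ S.card := Finset.card_le_card hTS
    have step : ∀ W ∈ (Sᶜ : Finset (Fin d)).powerset,
        (1/(d:ℝ)) * (if i ∈ T ∪ W then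
            margContrib p x (T ∪ W) i / ((d - 1).choose ((T ∪ W).card - 1) : ℝ) else 0)
        = margContrib p x T i * (1 / ((d:ℝ) * ((d-1).choose ((T.card - 1) + W.card)))) := by
      intro W hW
      have hWc : W ⊆ Sᶜ := Finset.mem_powerset.mp hW
      have hWS : ∀ j ∈ W, j ∉ S := fun j hj => Finset.mem_compl.mp (hWc hj)
      have hdisj : Disjoint T W := Finset.disjoint_left.mpr fun j hj hj' => hWS j hj' (hTS hj)
      have hcard : (T ∪ W).card = T.card + W.card := Finset.card_union_of_disjoint hdisj
      have hcard1 : (T ∪ W).card - 1 = (T.card - 1) + W.card := by omega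
      have hinter : (T ∪ W) ∩ S = T := by
        ext j
        simp only [Finset.mem_inter, Finset.mem_union]
        constructor
        · rintro ⟨h | h, hS⟩
          · exact h
          · exact absurd hS (hWS j h)
        · intro h; exact ⟨Or.inl h, hTS h⟩
      have hmc : margContrib p x (T ∪ W) i = margContrib p x T i := by
        rw [margContrib_inter p hpos i S hiS hCI (T ∪ W) (Finset.mem_union_left W hiT) x, hinter]
      rw [if_pos (Finset.mem_union_left W hiT), hmc, hcard1]
      ring
    rw [Finset.sum_congr rfl step, ← Finset.mul_sum]
    have hgroup : ∑ W ∈ (Sᶜ : Finset (Fin d)).powerset,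
          (1 / ((d:ℝ) * ((d-1).choose ((T.card - 1) + W.card))))
        = ∑ k ∈ Finset.range ((Sᶜ : Finset (Fin d)).card + 1),
            ((Sᶜ : Finset (Fin d)).card.choose k : ℝ) *
              (1 / ((d:ℝ) * ((d-1).choose ((T.card - 1) + k)))) := by
      rw [Finset.sum_powerset]
      refine Finset.sum_congr rfl fun k hk => ?_
      rw [Finset.sum_congr rfl (fun W hW => by rw [(Finset.mem_powersetCard.mp hW).2]),
        Finset.sum_const, Finset.card_powersetCard, nsmul_eq_mul]
    rw [hgroup, hScompl]
    have hcs : ∑ k ∈ Finset.range (d - S.card + 1),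
          ((d - S.card).choose k : ℝ) * (1 / ((d:ℝ) * ((d-1).choose ((T.card - 1) + k))))
        = 1 / ((S.card : ℝ) * ((S.card - 1).choose (T.card - 1))) := by
      have h5 : ∀ k ∈ Finset.range (d - S.card + 1),
          ((d - S.card).choose k : ℝ) * (1 / ((d:ℝ) * ((d-1).choose ((T.card - 1) + k))))
          = ((d - S.card).choose k : ℝ) / ((d:ℝ) * ((d-1).choose ((T.card - 1) + k))) :=
        fun k _ => mul_one_div _ _
      rw [Finset.sum_congr rfl h5]
      exact comb_sum S.card (T.card - 1) (by omega) hs1 d hsd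
    rw [hcs, if_pos hiT]
    ring
  · have hz : ∀ W ∈ (Sᶜ : Finset (Fin d)).powerset,
        (1/(d:ℝ)) * (if i ∈ T ∪ W then
            margContrib p x (T ∪ W) i / ((d - 1).choose ((T ∪ W).card - 1) : ℝ) else 0) = 0 := by
      intro W hW
      rw [if_neg, mul_zero]
      intro hiTW
      rcases Finset.mem_union.mp hiTW with h | h
      · exact hiT h
      · exact Finset.mem_compl.mp (Finset.mem_powerset.mp hW h) hiS
    rw [Finset.sum_eq_zero hz, if_neg hiT, mul_zero]
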